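/- There exist constants C > 0 and D > 0 such that for all u ∈ ℝ, φ̂(u)² − 1 ≤ −C u²/(D + u²). -/

import Mathlib

/-- The Fourier transform of the indicator function of `[-1/2, 1/2]`:
`φ̂(x) = sin(πx)/(πx)` for `x ≠ 0` and `φ̂(0) = 1`. -/
noncomputable def phihat (x : ℝ) : ℝ :=
  if x = 0 then 1 else Real.sin (Real.pi * x) / (Real.pi * x)

lemma phihat_abs (u : ℝ) : phihat |u| = phihat u := by
  rcases abs_choice u with h | h
  · rw [h]
  · rw [h]
    unfold phihat
    rcases eq_or_ne u 0 with rfl | hu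
    · simp
    · rw [if_neg hu, if_neg (neg_ne_zero.mpr hu), mul_neg, Real.sin_neg, neg_div_neg_eq]

lemma sin_sq_small {x : ℝ} (h0 : 0 ≤ x) (h1 : x ≤ 1) :
    Real.sin x ^ 2 ≤ x ^ 2 - x ^ 4 / 8 := by
  have habs : |x| = x := abs_of_nonneg h0
  have hb := Real.sin_bound (by rw [habs]; exact h1)
  rw [habs] at hb
  have hub : Real.sin x ≤ x - 11 * x ^ 3 / 96 := by
    have := (abs_le.mp hb).2
    nlinarith [pow_le_pow_of_le_one h0 h1 (show 3 ≤ 5 by norm_num), pow_nonneg h0 3]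
  have hnn : 0 ≤ Real.sin x := by
    apply Real.sin_nonneg_of_nonneg_of_le_pi h0
    linarith [Real.pi_gt_three]
  nlinarith [pow_le_pow_of_le_one h0 h1 (show 4 ≤ 6 by norm_num),
    sq_nonneg x, sq_nonneg (x^2)]

lemma sin_sq_mid : ∃ m : ℝ, 0 < m ∧ ∀ x : ℝ, 1 ≤ x → x ≤ 2 →
    Real.sin x ^ 2 ≤ x ^ 2 - m := by
  have hc : ContinuousOn (fun x : ℝ => x ^ 2 - Real.sin x ^ 2) (Set.Icc 1 2) :=
    (continuous_pow 2).continuousOn.sub ((Real.continuous_sin.pow 2).continuousOn)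
  obtain ⟨x₀, hx₀, hmin⟩ := (isCompact_Icc (a := (1:ℝ)) (b := 2)).exists_isMinOn
    (Set.nonempty_Icc.mpr (by norm_num)) hc
  refine ⟨x₀ ^ 2 - Real.sin x₀ ^ 2, ?_, ?_⟩
  · have hx₀pos : (0:ℝ) < x₀ := lt_of_lt_of_le one_pos hx₀.1
    have hs : Real.sin x₀ < x₀ := Real.sin_lt hx₀pos
    have hsn : 0 ≤ Real.sin x₀ := by
      apply Real.sin_nonneg_of_nonneg_of_le_pi hx₀pos.le
      linarith [Real.pi_gt_three, hx₀.2]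
    nlinarith
  · intro x h1 h2
    have := hmin (Set.mem_Icc.mpr ⟨h1, h2⟩)
    simp only [Set.mem_setOf_eq] at this
    linarith [this]

/-- There exist constants `C, D > 0` such that
`φ̂(u)² - 1 ≤ -C u²/(D + u²)` for all real `u`. -/
theorem stmt_9 :
    ∃ C D : ℝ, 0 < C ∧ 0 < D ∧
      ∀ u : ℝ, phihat u ^ 2 - 1 ≤ -(C * u ^ 2 / (D + u ^ 2)) := by
  obtain ⟨m, hm, hmid⟩ := sin_sq_mid
  set C : ℝ := min (Real.pi ^ 2 / 8) (min (m / 4) (3 / 4)) with hC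
  have hpi := Real.pi_gt_three
  have hCpos : 0 < C := by
    apply lt_min
    · positivity
    · exact lt_min (by positivity) (by norm_num)
  refine ⟨C, 1, hCpos, one_pos, ?_⟩
  -- main claim for nonnegative u
  have main : ∀ u : ℝ, 0 ≤ u → phihat u ^ 2 - 1 ≤ -(C * u ^ 2 / (1 + u ^ 2)) := by
    intro u hu
    rcases eq_or_lt_of_le hu with rfl | hupos
    · simp [phihat]
    · set x : ℝ := Real.pi * u with hxdef
      have hxpos : 0 < x := by positivity
      have hx2 : (0:ℝ) < x ^ 2 := by positivity
      have hden : (0:ℝ) < 1 + u ^ 2 := by positivity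
      have hphi : phihat u ^ 2 = Real.sin x ^ 2 / x ^ 2 := by
        rw [phihat, if_neg hupos.ne', div_pow]
      have key : C * u ^ 2 / (1 + u ^ 2) ≤ 1 - Real.sin x ^ 2 / x ^ 2 := by
        rcases le_or_gt x 1 with hx1 | hx1
        · -- small regime
          have hs := sin_sq_small hxpos.le hx1
          have h1 : Real.sin x ^ 2 / x ^ 2 ≤ 1 - x ^ 2 / 8 := by
            rw [div_le_iff₀ hx2]; nlinarith
          have h2 : C * u ^ 2 / (1 + u ^ 2) ≤ x ^ 2 / 8 := by
            rw [div_le_iff₀ hden]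
            have hCle : C ≤ Real.pi ^ 2 / 8 := min_le_left _ _
            have hx2u : x ^ 2 = Real.pi ^ 2 * u ^ 2 := by rw [hxdef]; ring
            nlinarith [sq_nonneg u, mul_nonneg (sq_nonneg u) (sq_nonneg u)]
          linarith
        · -- x ≥ 1
          have hBle : C * u ^ 2 / (1 + u ^ 2) ≤ C := by
            rw [div_le_iff₀ hden]; nlinarith
          rcases le_or_gt x 2 with hx2' | hx2' 
          · have hs := hmid x hx1.le hx2'
            have h1 : Real.sin x ^ 2 / x ^ 2 ≤ 1 - m / 4 := by
              rw [div_le_iff₀ hx2]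
              have hx4 : x ^ 2 ≤ 4 := by nlinarith
              nlinarith [mul_le_mul_of_nonneg_left hx4 hm.le]
            have hCle : C ≤ m / 4 := le_trans (min_le_right _ _) (min_le_left _ _)
            linarith
          · have hs : Real.sin x ^ 2 ≤ 1 := Real.sin_sq_le_one x
            have h1 : Real.sin x ^ 2 / x ^ 2 ≤ 1 - 3 / 4 := by
              rw [div_le_iff₀ hx2]
              nlinarith
            have hCle : C ≤ 3 / 4 := le_trans (min_le_right _ _) (min_le_right _ _)
            linarith
      rw [hphi]
      linarith
  intro u
  have h := main |u| (abs_nonneg u)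
  rwa [phihat_abs, sq_abs] at h
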